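/- For every real number x with 0 < x < 1, 8·F_{2,1}(1,x) = 4·Li₃(x) − Li₃(x²) − 4·Li₃(1−x) − 4·Li₃(x/(1+x)) + 4·ζ(3) + log((1+x)/(1−x))·Li₂(x²) + (π²/2)·log(1+x) + (π²/6)·log(1−x) + (2/3)·log³(1+x) − 2·log(x)·log²(1−x). -/

import Mathlib

open Real Filter

/-- The polylogarithm `Li_k(z) = ∑_{n≥1} zⁿ/n^k` (real). -/
noncomputable def Li (k : ℕ) (z : ℝ) : ℝ := ∑' n : ℕ, z ^ (n + 1) / ((n + 1 : ℕ) : ℝ) ^ k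

noncomputable def LiD (k : ℕ) (z : ℝ) : ℝ := ∑' n : ℕ, z ^ n / ((n + 1 : ℕ) : ℝ) ^ k

lemma aux_le_one (k n : ℕ) : (1:ℝ) ≤ ((n + 1 : ℕ) : ℝ) ^ k :=
  one_le_pow₀ (by exact_mod_cast Nat.one_le_iff_ne_zero.mpr (Nat.succ_ne_zero n))

lemma summable_geom_bound (k : ℕ) {x : ℝ} (h : |x| < 1) :
    Summable fun n : ℕ => x ^ n / ((n + 1 : ℕ) : ℝ) ^ k := by
  apply Summable.of_norm_bounded (g := fun n => |x| ^ n) (summable_geometric_of_lt_one (abs_nonneg x) h)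
  intro n
  rw [norm_div, norm_pow, Real.norm_eq_abs, Real.norm_eq_abs, abs_pow,
    abs_of_nonneg (by positivity : (0:ℝ) ≤ ((n + 1 : ℕ) : ℝ))]
  exact div_le_self (by positivity) (aux_le_one k n)

lemma summable_Li (k : ℕ) {x : ℝ} (h : |x| < 1) :
    Summable fun n : ℕ => x ^ (n + 1) / ((n + 1 : ℕ) : ℝ) ^ k := by
  have := (summable_geom_bound k h).mul_left x
  simpa [mul_div_assoc, pow_succ, mul_comm, mul_left_comm] using this

lemma Li_eq_mul (k : ℕ) (x : ℝ) : Li k x = x * LiD k x := by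
  rw [Li, LiD, ← tsum_mul_left]
  congr 1; funext n; rw [pow_succ]; ring

lemma Li_zero (k : ℕ) : Li k 0 = 0 := by simp [Li]

lemma hasDerivAt_Li (k : ℕ) {x : ℝ} (h : |x| < 1) :
    HasDerivAt (Li (k + 1)) (LiD k x) x := by
  set r : ℝ := (1 + |x|) / 2 with hr
  have hr1 : r < 1 := by rw [hr]; linarith
  have hr0 : 0 ≤ r := by positivity
  have hxr : |x| < r := by rw [hr]; linarith [abs_nonneg x]
  have := hasDerivAt_tsum_of_isPreconnected
    (u := fun n => r ^ n)
    (g := fun n y => y ^ (n + 1) / ((n + 1 : ℕ) : ℝ) ^ (k+1))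
    (g' := fun n y => y ^ n / ((n + 1 : ℕ) : ℝ) ^ k)
    (summable_geometric_of_lt_one hr0 hr1)
    (Metric.isOpen_ball (x := (0:ℝ)) (ε := r))
    ((convex_ball (0:ℝ) r).isPreconnected)
    (fun n y _ => ?_) (fun n y hy => ?_) (y₀ := 0) ?_ ?_ (y := x) ?_
  · exact this
  · -- HasDerivAt for each term
    have h1 : HasDerivAt (fun y : ℝ => y ^ (n + 1)) ((n+1) * y ^ n) y := by
      simpa using hasDerivAt_pow (n+1) y
    have h2 := h1.div_const (((n + 1 : ℕ) : ℝ) ^ (k+1))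
    refine h2.congr_deriv (Eq.symm ?_)
    have hne : ((n + 1 : ℕ) : ℝ) ≠ 0 := by positivity
    field_simp [pow_succ]
    push_cast
    ring
  · -- bound
    have hy' : |y| < r := by simpa [Real.dist_eq] using hy
    rw [Real.norm_eq_abs, abs_div, abs_pow, abs_pow,
      abs_of_nonneg (by positivity : (0:ℝ) ≤ ((n + 1 : ℕ) : ℝ))]
    calc |y| ^ n / ((n + 1 : ℕ) : ℝ) ^ k ≤ |y| ^ n := div_le_self (by positivity) (aux_le_one k n)
      _ ≤ r ^ n := pow_le_pow_left₀ (abs_nonneg y) hy'.le n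
  · have : (0:ℝ) < r := by rw [hr]; positivity
    simpa [Real.dist_eq] using this
  · exact summable_zero.congr (fun n => by simp)
  · simpa [Real.dist_eq] using hxr

lemma LiD_one_eq {x : ℝ} (h : |x| < 1) (hx : x ≠ 0) : LiD 1 x = -log (1 - x) / x := by
  have hs := Real.hasSum_pow_div_log_of_abs_lt_one h
  have h2 : HasSum (fun n : ℕ => x * (x ^ n / ((n + 1 : ℕ) : ℝ) ^ 1)) (-log (1 - x)) := by
    refine hs.congr_fun fun n => ?_
    push_cast
    rw [pow_one, pow_succ]
    ring
  have h4 : ∀ n : ℕ, x⁻¹ * (x * (x ^ n / ((n + 1 : ℕ) : ℝ) ^ 1)) = x ^ n / ((n + 1 : ℕ) : ℝ) ^ 1 :=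
    fun n => by field_simp
  have h3 := (h2.mul_left x⁻¹).tsum_eq
  rw [LiD, ← tsum_congr h4, h3, div_eq_inv_mul]

lemma LiD_eq_div (k : ℕ) {x : ℝ} (hx : x ≠ 0) : LiD k x = Li k x / x := by
  rw [Li_eq_mul, eq_div_iff hx]; ring

lemma summable_one_div_sq : Summable fun n : ℕ => 1 / ((n + 1 : ℕ) : ℝ) ^ 2 := by
  have := Real.summable_one_div_nat_pow.mpr (le_refl 2)
  exact_mod_cast (summable_nat_add_iff 1).mpr this

lemma Li_one (k : ℕ) : Li k 1 = ∑' n : ℕ, 1 / ((n + 1 : ℕ) : ℝ) ^ k := by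
  rw [Li]; exact tsum_congr fun n => by rw [one_pow]

lemma Li_two_one : Li 2 1 = π ^ 2 / 6 := by
  rw [Li_one]
  have h := hasSum_zeta_two
  have h2 : HasSum (fun n : ℕ => 1 / ((n + 1 : ℕ) : ℝ) ^ 2) (π ^ 2 / 6) := by
    have := (hasSum_nat_add_iff' (f := fun n : ℕ => (1:ℝ) / (n : ℝ) ^ 2) 1).mpr h
    simpa using this
  exact h2.tsum_eq

lemma tendsto_Li {k : ℕ} (hk : 2 ≤ k) {f : ℝ → ℝ} {l : Filter ℝ} {c : ℝ}
    (hf : Filter.Tendsto f l (nhds c)) (hb : ∀ᶠ y in l, |f y| ≤ 1) :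
    Filter.Tendsto (fun y => Li k (f y)) l (nhds (Li k c)) := by
  have hsum : Summable fun n : ℕ => 1 / ((n + 1 : ℕ) : ℝ) ^ k := by
    apply summable_one_div_sq.of_nonneg_of_le (fun n => by positivity)
    intro n
    apply div_le_div_of_nonneg_left one_pos.le (by positivity)
    exact pow_le_pow_right₀ (by exact_mod_cast Nat.succ_le_succ (Nat.zero_le n)) hk
  have := tendsto_tsum_of_dominated_convergence (f := fun y n => (f y) ^ (n+1) / ((n + 1 : ℕ) : ℝ) ^ k)
    (g := fun n => c ^ (n+1) / ((n + 1 : ℕ) : ℝ) ^ k) (bound := fun n => 1 / ((n + 1 : ℕ) : ℝ) ^ k)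
    hsum (fun n => ((hf.pow (n+1)).div_const _)) ?_
  · exact this
  · filter_upwards [hb] with y hy
    intro n
    rw [Real.norm_eq_abs, abs_div, abs_pow, abs_pow,
      abs_of_nonneg (by positivity : (0:ℝ) ≤ ((n + 1 : ℕ) : ℝ))]
    gcongr
    exact pow_le_one₀ (abs_nonneg _) hy

noncomputable def Od (x : ℝ) : ℝ := ∑' n : ℕ, x ^ (2 * n + 1) / ((2 * n + 1 : ℕ) : ℝ) ^ 2

lemma summable_od {x : ℝ} (h : |x| < 1) :
    Summable fun n : ℕ => x ^ (2 * n + 1) / ((2 * n + 1 : ℕ) : ℝ) ^ 2 := by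
  apply Summable.of_norm_bounded (g := fun n => |x| ^ (2 * n + 1)) ?_
  · intro n
    rw [Real.norm_eq_abs, abs_div, abs_pow,
      abs_of_nonneg (by positivity : (0:ℝ) ≤ ((2 * n + 1 : ℕ) : ℝ) ^ 2)]
    exact div_le_self (by positivity) (one_le_pow₀ (by exact_mod_cast Nat.succ_le_succ (Nat.zero_le _)))
  · have h2 : |x| ^ 2 < 1 := pow_lt_one₀ (abs_nonneg x) h (by norm_num)
    have := (summable_geometric_of_lt_one (by positivity) h2).mul_left |x|
    apply this.congr
    intro n
    rw [← pow_mul, ← pow_succ']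

lemma Li2_split {x : ℝ} (h : |x| < 1) : Li 2 x = Od x + (1 / 4) * Li 2 (x ^ 2) := by
  have hx2 : |x ^ 2| < 1 := by
    rw [abs_pow]; exact pow_lt_one₀ (abs_nonneg x) h (by norm_num)
  have he : HasSum (fun m : ℕ => x ^ (2 * m + 1) / ((2 * m + 1 : ℕ) : ℝ) ^ 2) (Od x) :=
    (summable_od h).hasSum
  have ho : HasSum (fun m : ℕ => x ^ (2 * m + 1 + 1) / ((2 * m + 1 + 1 : ℕ) : ℝ) ^ 2)
      ((1 / 4) * Li 2 (x ^ 2)) := by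
    have := ((summable_Li 2 hx2).hasSum.mul_left (1 / 4))
    apply this.congr_fun
    intro m
    have h1 : ((m:ℝ) + 1) ≠ 0 := by positivity
    push_cast
    rw [← pow_mul]
    field_simp
    ring
  have hf := HasSum.even_add_odd (f := fun j : ℕ => x ^ (j + 1) / ((j + 1 : ℕ) : ℝ) ^ 2) he ho
  rw [Li]
  exact hf.tsum_eq

lemma Li2_split_neg {x : ℝ} (h : |x| < 1) : Li 2 (-x) = -Od x + (1 / 4) * Li 2 (x ^ 2) := by
  have hx2 : |x ^ 2| < 1 := by
    rw [abs_pow]; exact pow_lt_one₀ (abs_nonneg x) h (by norm_num)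
  have he : HasSum (fun m : ℕ => (-x) ^ (2 * m + 1) / ((2 * m + 1 : ℕ) : ℝ) ^ 2) (-Od x) := by
    apply ((summable_od h).hasSum.neg).congr_fun
    intro m
    rw [Odd.neg_pow ⟨m, by ring⟩, neg_div]
  have ho : HasSum (fun m : ℕ => (-x) ^ (2 * m + 1 + 1) / ((2 * m + 1 + 1 : ℕ) : ℝ) ^ 2)
      ((1 / 4) * Li 2 (x ^ 2)) := by
    have := ((summable_Li 2 hx2).hasSum.mul_left (1 / 4))
    apply this.congr_fun
    intro m
    rw [Even.neg_pow ⟨m + 1, by ring⟩]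
    have h1 : ((m:ℝ) + 1) ≠ 0 := by positivity
    push_cast
    rw [← pow_mul]
    field_simp
    ring
  have hf := HasSum.even_add_odd (f := fun j : ℕ => (-x) ^ (j + 1) / ((j + 1 : ℕ) : ℝ) ^ 2) he ho
  rw [Li]
  exact hf.tsum_eq

lemma Li2_duplication {x : ℝ} (h : |x| < 1) :
    Li 2 x + Li 2 (-x) = (1 / 2) * Li 2 (x ^ 2) := by
  rw [Li2_split h, Li2_split_neg h]; ring

lemma summable_odd_sq : Summable fun n : ℕ => 1 / ((2 * n + 1 : ℕ) : ℝ) ^ 2 := by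
  apply summable_one_div_sq.of_nonneg_of_le (fun n => by positivity)
  intro n
  gcongr
  omega

lemma tsum_odd_sq : ∑' n : ℕ, 1 / ((2 * n + 1 : ℕ) : ℝ) ^ 2 = π ^ 2 / 8 := by
  have he : HasSum (fun m : ℕ => (1:ℝ) / ((2 * m : ℕ) : ℝ) ^ 2) (π ^ 2 / 24) := by
    have h := hasSum_zeta_two.mul_left (1 / 4)
    have h24 : (1:ℝ) / 4 * (π ^ 2 / 6) = π ^ 2 / 24 := by ring
    rw [h24] at h
    apply h.congr_fun
    intro m
    push_cast
    rcases Nat.eq_zero_or_pos m with hm | hm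
    · subst hm; norm_num
    · have hm' : ((m:ℝ)) ≠ 0 := by positivity
      field_simp
      ring
  have ho : HasSum (fun m : ℕ => (1:ℝ) / ((2 * m + 1 : ℕ) : ℝ) ^ 2)
      (∑' n : ℕ, 1 / ((2 * n + 1 : ℕ) : ℝ) ^ 2) := summable_odd_sq.hasSum
  have hf := HasSum.even_add_odd (f := fun j : ℕ => (1:ℝ) / ((j : ℕ) : ℝ) ^ 2) he ho
  have := hasSum_zeta_two.unique hf
  linarith

/-- constancy from zero derivative on (0,1) plus limit 0 at 0⁺ -/
lemma eq_zero_of_deriv_zero {H : ℝ → ℝ}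
    (hd : ∀ y ∈ Set.Ioo (0:ℝ) 1, HasDerivAt H 0 y)
    (h0 : Filter.Tendsto H (nhdsWithin 0 (Set.Ioi 0)) (nhds 0)) :
    ∀ x ∈ Set.Ioo (0:ℝ) 1, H x = 0 := by
  intro x hx
  have key : ∀ y ∈ Set.Ioo (0:ℝ) x, H y = H x := by
    intro y hy
    have hsub : Set.Icc y x ⊆ Set.Ioo (0:ℝ) 1 := fun z hz =>
      ⟨lt_of_lt_of_le hy.1 hz.1, lt_of_le_of_lt hz.2 hx.2⟩
    obtain ⟨c, hc, hc2⟩ := exists_hasDerivAt_eq_slope H (fun _ => 0) hy.2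
      (fun z hz => ((hd z (hsub hz)).continuousAt).continuousWithinAt)
      (fun z hz => hd z (hsub ⟨hz.1.le, hz.2.le⟩))
    have h := hc2.symm
    rw [div_eq_iff (by linarith [hy.2] : x - y ≠ 0)] at h
    -- h : H x - H y = 0 * (x - y)
    have : H x - H y = 0 := by rw [h]; ring
    linarith
  have hev : H =ᶠ[nhdsWithin 0 (Set.Ioi 0)] fun _ => H x := by
    filter_upwards [Ioo_mem_nhdsGT_of_mem ⟨le_refl 0, hx.1⟩] with y hy using key y hy
  have h1 : Filter.Tendsto (fun _ : ℝ => H x) (nhdsWithin 0 (Set.Ioi 0)) (nhds 0) := h0.congr' hev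
  exact (tendsto_nhds_unique tendsto_const_nhds h1)

lemma abs_lt_one_of_Ioo {y : ℝ} (hy : y ∈ Set.Ioo (0:ℝ) 1) : |y| < 1 := by
  rw [abs_of_pos hy.1]; exact hy.2

lemma abs_one_sub_lt {y : ℝ} (hy : y ∈ Set.Ioo (0:ℝ) 1) : |1 - y| < 1 := by
  rw [abs_of_pos (by linarith [hy.2])]; linarith [hy.1]

lemma abs_div_one_add_lt {y : ℝ} (hy : y ∈ Set.Ioo (0:ℝ) 1) : |y / (1 + y)| < 1 := by
  have h1 : (0:ℝ) < 1 + y := by linarith [hy.1]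
  rw [abs_of_pos (div_pos hy.1 h1), div_lt_one h1]
  linarith

lemma tendsto_zero_within : Filter.Tendsto (fun y : ℝ => y) (nhdsWithin 0 (Set.Ioi 0)) (nhds 0) :=
  Filter.tendsto_id.mono_left nhdsWithin_le_nhds

lemma ev_mem_Ioo : ∀ᶠ y in nhdsWithin (0:ℝ) (Set.Ioi 0), y ∈ Set.Ioo (0:ℝ) (1/2) :=
  Ioo_mem_nhdsGT_of_mem ⟨le_refl 0, by norm_num⟩

lemma neg_log_one_sub_le {y : ℝ} (h0 : 0 < y) (h2 : y ≤ 1/2) : -log (1 - y) ≤ 2 * y := by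
  have h1 : (0:ℝ) < 1 - y := by linarith
  have := Real.log_le_sub_one_of_pos (x := (1 - y)⁻¹) (by positivity)
  rw [Real.log_inv] at this
  have h3 : (1 - y)⁻¹ - 1 = y / (1 - y) := by field_simp; ring
  rw [h3] at this
  have h4 : y / (1 - y) ≤ 2 * y := by
    rw [div_le_iff₀ h1]
    nlinarith
  linarith

/-- `log y * log(1-y)^(j+1) → 0` as `y → 0⁺` -/
lemma tendsto_log_mul_log_pow (j : ℕ) :
    Filter.Tendsto (fun y : ℝ => log y * (log (1 - y)) ^ (j + 1))
      (nhdsWithin 0 (Set.Ioi 0)) (nhds 0) := by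
  apply squeeze_zero_norm'
    (a := fun y : ℝ => |y * log y| * 2 * (2 * y) ^ j)
  · filter_upwards [ev_mem_Ioo] with y hy
    have h0 := hy.1
    have h12 := hy.2
    have h1 : (0:ℝ) < 1 - y := by linarith
    have hle : |log (1 - y)| ≤ 2 * y := by
      rw [abs_of_nonpos (Real.log_nonpos (by linarith) (by linarith))]
      exact neg_log_one_sub_le h0 h12.le
    rw [Real.norm_eq_abs, abs_mul, abs_pow]
    calc |log y| * |log (1 - y)| ^ (j + 1) ≤ |log y| * (2 * y) ^ (j + 1) := by
          gcongr
      _ = |log y| * (2 * y) * (2 * y) ^ j := by ring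
      _ ≤ |y * log y| * 2 * (2 * y) ^ j := by
          rw [abs_mul, abs_of_pos h0]
          exact le_of_eq (by ring)
  · have h1 : Filter.Tendsto (fun y : ℝ => y * log y) (nhdsWithin 0 (Set.Ioi 0)) (nhds 0) := by
      have := continuous_mul_log.tendsto 0
      simp only [Real.log_zero, mul_zero, zero_mul] at this
      exact this.mono_left nhdsWithin_le_nhds
    have h2 : Filter.Tendsto (fun y : ℝ => (2 * y) ^ j) (nhdsWithin 0 (Set.Ioi 0)) (nhds ((2 * 0) ^ j)) := by
      apply Filter.Tendsto.pow
      exact (tendsto_zero_within.const_mul 2)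
    have := (h1.abs.mul_const 2).mul h2
    simpa using this

lemma euler_reflection {x : ℝ} (hx : x ∈ Set.Ioo (0:ℝ) 1) :
    Li 2 x + Li 2 (1 - x) + log x * log (1 - x) = π ^ 2 / 6 := by
  have key := eq_zero_of_deriv_zero
    (H := fun y => Li 2 y + Li 2 (1 - y) + log y * log (1 - y) - π ^ 2 / 6) ?_ ?_ x hx
  · linarith [key]
  · intro y hy
    have hy1 : |y| < 1 := abs_lt_one_of_Ioo hy
    have hy2 : |1 - y| < 1 := abs_one_sub_lt hy
    have hy0 : y ≠ 0 := ne_of_gt hy.1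
    have hy1' : (1:ℝ) - y ≠ 0 := by linarith [hy.2]
    have h1 := hasDerivAt_Li 1 hy1
    have h2 := (hasDerivAt_Li 1 hy2).comp y ((hasDerivAt_id y).const_sub 1)
    have h3 := (Real.hasDerivAt_log hy0).mul
      ((Real.hasDerivAt_log hy1').comp y ((hasDerivAt_id y).const_sub 1))
    have h := (h1.add h2).add h3 |>.sub_const (π ^ 2 / 6)
    refine h.congr_deriv (Eq.symm ?_)
    rw [LiD_one_eq hy1 hy0, LiD_one_eq hy2 hy1']
    have : (1:ℝ) - (1 - y) = y := by ring
    rw [this]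
    simp only [Function.comp_apply]
    field_simp
    ring
  · have l1 : Filter.Tendsto (fun y : ℝ => Li 2 y) (nhdsWithin 0 (Set.Ioi 0)) (nhds 0) := by
      have := tendsto_Li (le_refl 2) tendsto_zero_within
        (by filter_upwards [ev_mem_Ioo] with y hy; rw [abs_of_pos hy.1]; linarith [hy.2])
      simpa [Li_zero] using this
    have l2 : Filter.Tendsto (fun y : ℝ => Li 2 (1 - y)) (nhdsWithin 0 (Set.Ioi 0)) (nhds (π ^ 2 / 6)) := by
      have := tendsto_Li (le_refl 2) ((tendsto_const_nhds (x := (1:ℝ))).sub tendsto_zero_within)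
        (by filter_upwards [ev_mem_Ioo] with y hy; rw [abs_of_pos (by linarith [hy.2] : (0:ℝ) < 1 - y)]; linarith [hy.1])
      simpa [Li_two_one] using this
    have l3 := tendsto_log_mul_log_pow 0
    simp only [zero_add, pow_one] at l3
    have := (l1.add l2).add l3 |>.sub_const (π ^ 2 / 6)
    simpa using this

lemma landen {x : ℝ} (hx : x ∈ Set.Ioo (0:ℝ) 1) :
    Li 2 (-x) + Li 2 (x / (1 + x)) + (1 / 2) * (log (1 + x)) ^ 2 = 0 := by
  apply eq_zero_of_deriv_zero
    (H := fun y => Li 2 (-y) + Li 2 (y / (1 + y)) + (1 / 2) * (log (1 + y)) ^ 2) ?_ ?_ x hx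
  · intro y hy
    have hy1 : |(-y)| < 1 := by rw [abs_neg]; exact abs_lt_one_of_Ioo hy
    have hyw : |y / (1 + y)| < 1 := abs_div_one_add_lt hy
    have hy0 : y ≠ 0 := ne_of_gt hy.1
    have h1y : (0:ℝ) < 1 + y := by linarith [hy.1]
    have h1y' : (1:ℝ) + y ≠ 0 := ne_of_gt h1y
    have hw0 : y / (1 + y) ≠ 0 := div_ne_zero hy0 h1y'
    have h1 := (hasDerivAt_Li 1 hy1).comp y (hasDerivAt_neg y)
    have hinner : HasDerivAt (fun z : ℝ => z / (1 + z)) ((1 * (1 + y) - y * 1) / (1 + y) ^ 2) y :=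
      (hasDerivAt_id y).div ((hasDerivAt_id y).const_add 1) h1y'
    have h2 := (hasDerivAt_Li 1 hyw).comp y hinner
    have h3 := (((Real.hasDerivAt_log h1y').comp y ((hasDerivAt_id y).const_add 1)).pow 2).const_mul (1/2 : ℝ)
    have h := (h1.add h2).add h3
    refine h.congr_deriv (Eq.symm ?_)
    rw [LiD_one_eq hy1 (neg_ne_zero.mpr hy0), LiD_one_eq hyw hw0]
    have e1 : (1:ℝ) - -y = 1 + y := by ring
    have e2 : (1:ℝ) - y / (1 + y) = (1 + y)⁻¹ := by field_simp; ring
    rw [e1, e2, Real.log_inv]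
    simp only [Function.comp_apply]
    field_simp
    ring
  · have l1 : Filter.Tendsto (fun y : ℝ => Li 2 (-y)) (nhdsWithin 0 (Set.Ioi 0)) (nhds 0) := by
      have := tendsto_Li (le_refl 2) tendsto_zero_within.neg
        (by filter_upwards [ev_mem_Ioo] with y hy; rw [abs_neg, abs_of_pos hy.1]; linarith [hy.2])
      simpa [Li_zero] using this
    have l2 : Filter.Tendsto (fun y : ℝ => Li 2 (y / (1 + y))) (nhdsWithin 0 (Set.Ioi 0)) (nhds 0) := by
      have htend : Filter.Tendsto (fun y : ℝ => y / (1 + y)) (nhdsWithin 0 (Set.Ioi 0)) (nhds 0) := by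
        have := tendsto_zero_within.div ((tendsto_const_nhds (x := (1:ℝ))).add tendsto_zero_within) (by norm_num)
        simpa [Pi.div_def] using this
      have := tendsto_Li (le_refl 2) htend
        (by filter_upwards [ev_mem_Ioo] with y hy
            exact (abs_div_one_add_lt ⟨hy.1, by linarith [hy.2]⟩).le)
      simpa [Li_zero] using this
    have l3 : Filter.Tendsto (fun y : ℝ => (1/2 : ℝ) * (log (1 + y)) ^ 2) (nhdsWithin 0 (Set.Ioi 0)) (nhds 0) := by
      have hlog : Filter.Tendsto (fun y : ℝ => log (1 + y)) (nhdsWithin 0 (Set.Ioi 0)) (nhds 0) := by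
        have hb : Filter.Tendsto (fun y : ℝ => 1 + y) (nhdsWithin 0 (Set.Ioi 0)) (nhds 1) := by
          have := (tendsto_const_nhds (x := (1:ℝ))).add tendsto_zero_within
          simpa using this
        have := (Real.continuousAt_log (by norm_num : (1:ℝ) ≠ 0)).tendsto.comp hb
        simpa [Function.comp_def] using this
      have := ((hlog.pow 2).const_mul (1/2 : ℝ))
      simpa using this
    have := (l1.add l2).add l3
    simpa using this

/-- `F_{2,1}(1,x) = ∑_{n≥0} (1/(2n+1)²) ∑_{m=0}^n x^(2m+1)/(2m+1)`. -/
noncomputable def F21 (x : ℝ) : ℝ :=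
  ∑' n : ℕ, (1 / ((2 * n + 1 : ℕ) : ℝ) ^ 2) *
    ∑ m ∈ Finset.range (n + 1), x ^ (2 * m + 1) / ((2 * m + 1 : ℕ) : ℝ)

lemma hasDerivAt_F21 {x : ℝ} (hx : x ∈ Set.Ioo (0:ℝ) 1) :
    HasDerivAt F21 ((π ^ 2 / 8 - x * Od x) / (1 - x ^ 2)) x := by
  have hx1 : |x| < 1 := abs_lt_one_of_Ioo hx
  set r : ℝ := (1 + |x|) / 2 with hr
  have hr1 : r < 1 := by rw [hr]; linarith
  have hr0 : (0:ℝ) ≤ r := by positivity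
  have hxr : |x| < r := by rw [hr]; linarith [abs_nonneg x]
  have hr2 : r ^ 2 < 1 := pow_lt_one₀ hr0 hr1 (by norm_num)
  have hgeo := summable_geometric_of_lt_one (by positivity : (0:ℝ) ≤ r ^ 2) hr2
  have key := hasDerivAt_tsum_of_isPreconnected
    (u := fun n => (1 / ((2 * n + 1 : ℕ) : ℝ) ^ 2) * (1 - r ^ 2)⁻¹)
    (g := fun n y => (1 / ((2 * n + 1 : ℕ) : ℝ) ^ 2) *
      ∑ m ∈ Finset.range (n + 1), y ^ (2 * m + 1) / ((2 * m + 1 : ℕ) : ℝ))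
    (g' := fun n y => (1 / ((2 * n + 1 : ℕ) : ℝ) ^ 2) * ∑ m ∈ Finset.range (n + 1), y ^ (2 * m))
    (summable_odd_sq.mul_right _)
    (Metric.isOpen_ball (x := (0:ℝ)) (ε := r))
    ((convex_ball (0:ℝ) r).isPreconnected)
    (fun n y _ => ?_) (fun n y hy => ?_) (y₀ := 0) ?_ ?_ (y := x) ?_
  · have : HasDerivAt F21 (∑' n : ℕ, (1 / ((2 * n + 1 : ℕ) : ℝ) ^ 2) *
        ∑ m ∈ Finset.range (n + 1), x ^ (2 * m)) x := key
    convert this using 1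
    have hx2ne : x ^ 2 ≠ 1 := by
      intro h
      have := abs_lt_one_of_Ioo hx
      nlinarith [hx.1, hx.2]
    have step : ∀ n : ℕ, (1 / ((2 * n + 1 : ℕ) : ℝ) ^ 2) * ∑ m ∈ Finset.range (n + 1), x ^ (2 * m)
        = (1 / ((2 * n + 1 : ℕ) : ℝ) ^ 2 - x * (x ^ (2 * n + 1) / ((2 * n + 1 : ℕ) : ℝ) ^ 2)) * (1 - x ^ 2)⁻¹ := by
      intro n
      have hsum : ∑ m ∈ Finset.range (n + 1), x ^ (2 * m) = ((x ^ 2) ^ (n + 1) - 1) / (x ^ 2 - 1) := by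
        rw [← geom_sum_eq hx2ne (n + 1)]
        exact Finset.sum_congr rfl fun m _ => pow_mul x 2 m
      rw [hsum]
      have h1 : x ^ 2 - 1 ≠ 0 := sub_ne_zero.mpr hx2ne
      have h2 : (1:ℝ) - x ^ 2 ≠ 0 := fun h => h1 (by linarith [sub_eq_zero.mp h])
      have h3 : ((2 * n + 1 : ℕ) : ℝ) ≠ 0 := by positivity
      field_simp
      rw [← pow_mul, ← pow_succ']
      ring_nf
    rw [tsum_congr step, tsum_mul_right, Summable.tsum_sub summable_odd_sq ((summable_od hx1).mul_left x),
      tsum_mul_left, tsum_odd_sq, Od, div_eq_mul_inv]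
  · -- HasDerivAt of each term
    have hs : HasDerivAt (fun z : ℝ => ∑ m ∈ Finset.range (n + 1), z ^ (2 * m + 1) / ((2 * m + 1 : ℕ) : ℝ))
        (∑ m ∈ Finset.range (n + 1), y ^ (2 * m)) y := by
      have : ∀ m ∈ Finset.range (n + 1),
          HasDerivAt (fun z : ℝ => z ^ (2 * m + 1) / ((2 * m + 1 : ℕ) : ℝ)) (y ^ (2 * m)) y := by
        intro m _
        have h1 := (hasDerivAt_pow (2 * m + 1) y).div_const ((2 * m + 1 : ℕ) : ℝ)
        refine h1.congr_deriv (Eq.symm ?_)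
        have h3 : ((2 * m + 1 : ℕ) : ℝ) ≠ 0 := by positivity
        push_cast
        push_cast at h3
        field_simp
      exact HasDerivAt.fun_sum this
    exact hs.const_mul _
  · -- bound
    have hy' : |y| < r := by simpa [Real.dist_eq] using hy
    rw [Real.norm_eq_abs, abs_mul, abs_of_nonneg (by positivity : (0:ℝ) ≤ 1 / ((2 * n + 1 : ℕ) : ℝ) ^ 2)]
    apply mul_le_mul_of_nonneg_left ?_ (by positivity)
    calc |∑ m ∈ Finset.range (n + 1), y ^ (2 * m)|
        ≤ ∑ m ∈ Finset.range (n + 1), |y ^ (2 * m)| := Finset.abs_sum_le_sum_abs _ _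
      _ ≤ ∑ m ∈ Finset.range (n + 1), (r ^ 2) ^ m := by
          apply Finset.sum_le_sum
          intro m _
          rw [abs_pow, pow_mul]
          exact pow_le_pow_left₀ (by positivity) (pow_le_pow_left₀ (abs_nonneg y) hy'.le 2) m
      _ ≤ (1 - r ^ 2)⁻¹ := by
          have := Summable.sum_le_tsum (Finset.range (n + 1)) (fun i _ => by positivity : ∀ i ∉ Finset.range (n+1), (0:ℝ) ≤ (r ^ 2) ^ i) hgeo
          rwa [tsum_geometric_of_lt_one (by positivity) hr2] at this
  · have : (0:ℝ) < r := by rw [hr]; positivity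
    simpa [Real.dist_eq] using this
  · apply summable_zero.congr
    intro n
    have hz : ∀ m ∈ Finset.range (n + 1), (0:ℝ) ^ (2 * m + 1) / ((2 * m + 1 : ℕ) : ℝ) = 0 :=
      fun m _ => by rw [zero_pow (by omega : 2 * m + 1 ≠ 0), zero_div]
    show (0:ℝ) = _
    rw [Finset.sum_eq_zero hz, mul_zero]
  · simpa [Real.dist_eq] using hxr

lemma one_le_cast_odd (m : ℕ) : (1:ℝ) ≤ ((2 * m + 1 : ℕ) : ℝ) := by
  exact_mod_cast Nat.one_le_iff_ne_zero.mpr (by omega)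

lemma tendsto_F21 : Filter.Tendsto F21 (nhdsWithin 0 (Set.Ioi 0)) (nhds 0) := by
  apply squeeze_zero' (g := fun y : ℝ => π ^ 2 / 4 * y)
  · filter_upwards [ev_mem_Ioo] with y hy
    apply tsum_nonneg
    intro n
    apply mul_nonneg (by positivity)
    apply Finset.sum_nonneg
    intro m _
    exact div_nonneg (pow_nonneg hy.1.le _) (by positivity)
  · filter_upwards [ev_mem_Ioo] with y hy
    have h0 := hy.1
    have h12 := hy.2
    have hy2 : y ^ 2 < 1 := by nlinarith
    have hinner : ∀ n : ℕ, ∑ m ∈ Finset.range (n + 1), y ^ (2 * m + 1) / ((2 * m + 1 : ℕ) : ℝ) ≤ 2 * y := by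
      intro n
      have hgeo := summable_geometric_of_lt_one (by positivity : (0:ℝ) ≤ y ^ 2) hy2
      calc ∑ m ∈ Finset.range (n + 1), y ^ (2 * m + 1) / ((2 * m + 1 : ℕ) : ℝ)
          ≤ ∑ m ∈ Finset.range (n + 1), y * (y ^ 2) ^ m := by
            apply Finset.sum_le_sum
            intro m _
            have : y ^ (2 * m + 1) = y * (y ^ 2) ^ m := by rw [← pow_mul, ← pow_succ']
            rw [← this]
            exact div_le_self (by positivity) (one_le_cast_odd m)
        _ = y * ∑ m ∈ Finset.range (n + 1), (y ^ 2) ^ m := by rw [Finset.mul_sum]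
        _ ≤ y * (1 - y ^ 2)⁻¹ := by
            apply mul_le_mul_of_nonneg_left ?_ h0.le
            have := Summable.sum_le_tsum (Finset.range (n + 1)) (fun i _ => by positivity) hgeo
            rwa [tsum_geometric_of_lt_one (by positivity) hy2] at this
        _ ≤ 2 * y := by
            rw [mul_comm]
            apply mul_le_mul_of_nonneg_right ?_ h0.le
            rw [inv_le_iff_one_le_mul₀ (by nlinarith)]
            nlinarith
    have hsum : Summable fun n : ℕ => (1 / ((2 * n + 1 : ℕ) : ℝ) ^ 2) *
        ∑ m ∈ Finset.range (n + 1), y ^ (2 * m + 1) / ((2 * m + 1 : ℕ) : ℝ) := by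
      apply Summable.of_nonneg_of_le (fun n => mul_nonneg (by positivity)
        (Finset.sum_nonneg fun m _ => by positivity)) ?_ (summable_odd_sq.mul_right (2 * y))
      intro n
      exact mul_le_mul_of_nonneg_left (hinner n) (by positivity)
    calc F21 y ≤ ∑' n : ℕ, (1 / ((2 * n + 1 : ℕ) : ℝ) ^ 2) * (2 * y) := by
          apply Summable.tsum_le_tsum ?_ hsum (summable_odd_sq.mul_right (2 * y))
          intro n
          exact mul_le_mul_of_nonneg_left (hinner n) (by positivity)
      _ = π ^ 2 / 8 * (2 * y) := by rw [tsum_mul_right, tsum_odd_sq]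
      _ = π ^ 2 / 4 * y := by ring
  · have := tendsto_zero_within.const_mul (π ^ 2 / 4)
    simpa using this

set_option maxHeartbeats 2000000 in
theorem F21_closed_form (x : ℝ) (hx0 : 0 < x) (hx1 : x < 1) :
    8 * F21 x =
      4 * Li 3 x - Li 3 (x ^ 2) - 4 * Li 3 (1 - x) - 4 * Li 3 (x / (1 + x))
        + 4 * (∑' n : ℕ, 1 / ((n : ℝ) + 1) ^ 3)
        + Real.log ((1 + x) / (1 - x)) * Li 2 (x ^ 2)
        + (Real.pi ^ 2 / 2) * Real.log (1 + x)
        + (Real.pi ^ 2 / 6) * Real.log (1 - x)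
        + (2 / 3) * (Real.log (1 + x)) ^ 3
        - 2 * Real.log x * (Real.log (1 - x)) ^ 2 := by
  have hxI : x ∈ Set.Ioo (0:ℝ) 1 := ⟨hx0, hx1⟩
  set Z : ℝ := ∑' n : ℕ, 1 / ((n : ℝ) + 1) ^ 3 with hZ
  have hLi31 : Li 3 1 = Z := by
    rw [Li_one, hZ]
    exact tsum_congr fun n => by push_cast; ring
  have key := eq_zero_of_deriv_zero (H := fun y =>
      4 * Li 3 y - Li 3 (y ^ 2) - 4 * Li 3 (1 - y) - 4 * Li 3 (y / (1 + y)) + 4 * Z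
      + (log (1 + y) - log (1 - y)) * Li 2 (y ^ 2)
      + π ^ 2 / 2 * log (1 + y) + π ^ 2 / 6 * log (1 - y)
      + 2 / 3 * (log (1 + y)) ^ 3 - 2 * log y * (log (1 - y)) ^ 2 - 8 * F21 y) ?_ ?_ x hxI
  · rw [Real.log_div (by linarith : (1:ℝ) + x ≠ 0) (by linarith : (1:ℝ) - x ≠ 0)]
    linarith [key]
  · -- derivative is zero
    intro y hy
    have hy1 : |y| < 1 := abs_lt_one_of_Ioo hy
    have hysq : |y ^ 2| < 1 := by rw [abs_pow]; exact pow_lt_one₀ (abs_nonneg y) hy1 (by norm_num)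
    have hy1s : |1 - y| < 1 := abs_one_sub_lt hy
    have hyw : |y / (1 + y)| < 1 := abs_div_one_add_lt hy
    have hy0 : y ≠ 0 := ne_of_gt hy.1
    have h1y : (0:ℝ) < 1 + y := by linarith [hy.1]
    have h1y' : (1:ℝ) + y ≠ 0 := ne_of_gt h1y
    have h1my : (0:ℝ) < 1 - y := by linarith [hy.2]
    have h1my' : (1:ℝ) - y ≠ 0 := ne_of_gt h1my
    have hysqne : y ^ 2 ≠ 0 := pow_ne_zero 2 hy0
    have hwne : y / (1 + y) ≠ 0 := div_ne_zero hy0 h1y'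
    have h1mysq : (1:ℝ) - y ^ 2 ≠ 0 := by
      intro h; nlinarith [hy.1, hy.2]
    have hinner : HasDerivAt (fun z : ℝ => z / (1 + z)) ((1 * (1 + y) - y * 1) / (1 + y) ^ 2) y :=
      (hasDerivAt_id y).div ((hasDerivAt_id y).const_add 1) h1y'
    have dlog1p : HasDerivAt (fun z : ℝ => log (1 + z)) ((1 + y)⁻¹ * 1) y :=
      (Real.hasDerivAt_log h1y').comp y ((hasDerivAt_id y).const_add 1)
    have dlog1m : HasDerivAt (fun z : ℝ => log (1 - z)) ((1 - y)⁻¹ * -1) y :=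
      (Real.hasDerivAt_log h1my').comp y ((hasDerivAt_id y).const_sub 1)
    have d1 := (hasDerivAt_Li 2 hy1).const_mul (4:ℝ)
    have d2 := HasDerivAt.comp (h := fun z : ℝ => z ^ 2) y (hasDerivAt_Li 2 hysq) (hasDerivAt_pow 2 y)
    have d3 := ((hasDerivAt_Li 2 hy1s).comp y ((hasDerivAt_id y).const_sub 1)).const_mul (4:ℝ)
    have d4 := ((hasDerivAt_Li 2 hyw).comp y hinner).const_mul (4:ℝ)
    have d5 := (dlog1p.sub dlog1m).mul (HasDerivAt.comp (h := fun z : ℝ => z ^ 2) y (hasDerivAt_Li 1 hysq) (hasDerivAt_pow 2 y))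
    have d6 := dlog1p.const_mul (π ^ 2 / 2)
    have d7 := dlog1m.const_mul (π ^ 2 / 6)
    have d8 := (dlog1p.pow 3).const_mul ((2:ℝ) / 3)
    have d9 := ((Real.hasDerivAt_log hy0).const_mul (2:ℝ)).mul (dlog1m.pow 2)
    have d10 := (hasDerivAt_F21 hy).const_mul (8:ℝ)
    have h := (((((((((d1.sub d2).sub d3).sub d4).add_const (4 * Z)).add d5).add d6).add d7).add
      d8).sub d9).sub d10
    refine h.congr_deriv ?_
    simp only [Function.comp_apply, Pi.sub_apply, Pi.pow_apply, show (1 + 1 : ℕ) = 2 from rfl, show (2 + 1 : ℕ) = 3 from rfl]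
    rw [LiD_eq_div 2 hy0, LiD_eq_div 2 hysqne, LiD_eq_div 2 h1my', LiD_eq_div 2 hwne,
      LiD_one_eq hysq hysqne]
    have hEuler : Li 2 (1 - y) = π ^ 2 / 6 - log y * log (1 - y) - Li 2 y := by
      have := euler_reflection hy; linarith
    have hLanden : Li 2 (y / (1 + y)) = -Li 2 (-y) - 1 / 2 * (log (1 + y)) ^ 2 := by
      have := landen hy; linarith
    have hdup : Li 2 (y ^ 2) = 2 * Li 2 y + 2 * Li 2 (-y) := by
      have := Li2_duplication hy1; linarith
    have hOd : Od y = Li 2 y - 1 / 4 * Li 2 (y ^ 2) := by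
      have := Li2_split hy1; linarith
    have hlogsplit : log (1 - y ^ 2) = log (1 - y) + log (1 + y) := by
      rw [show (1:ℝ) - y ^ 2 = (1 - y) * (1 + y) by ring, Real.log_mul h1my' h1y']
    rw [hOd, hdup, hEuler, hLanden, hlogsplit]
    have h2 : ((2:ℕ):ℝ) = 2 := by norm_num
    rw [h2]
    field_simp
    ring
  · -- limit is zero
    set l := nhdsWithin (0:ℝ) (Set.Ioi 0) with hl
    have hb_id : ∀ᶠ y in l, |y| ≤ 1 := by
      filter_upwards [ev_mem_Ioo] with y hy; rw [abs_of_pos hy.1]; linarith [hy.2]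
    have hb_sq : ∀ᶠ y in l, |y ^ 2| ≤ 1 := by
      filter_upwards [ev_mem_Ioo] with y hy
      rw [abs_pow, abs_of_pos hy.1]
      nlinarith [hy.1, hy.2]
    have hb_1s : ∀ᶠ y in l, |1 - y| ≤ 1 := by
      filter_upwards [ev_mem_Ioo] with y hy
      rw [abs_of_pos (by linarith [hy.2] : (0:ℝ) < 1 - y)]; linarith [hy.1]
    have hb_w : ∀ᶠ y in l, |y / (1 + y)| ≤ 1 := by
      filter_upwards [ev_mem_Ioo] with y hy
      exact (abs_div_one_add_lt ⟨hy.1, by linarith [hy.2]⟩).le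
    have ht_sq : Filter.Tendsto (fun y : ℝ => y ^ 2) l (nhds 0) := by
      have := tendsto_zero_within.pow 2; simpa using this
    have ht_1s : Filter.Tendsto (fun y : ℝ => 1 - y) l (nhds 1) := by
      have := (tendsto_const_nhds (x := (1:ℝ))).sub tendsto_zero_within; simpa using this
    have ht_w : Filter.Tendsto (fun y : ℝ => y / (1 + y)) l (nhds 0) := by
      have := tendsto_zero_within.div ((tendsto_const_nhds (x := (1:ℝ))).add tendsto_zero_within)
        (by norm_num)
      simpa [Pi.div_def] using this
    have hlog1p : Filter.Tendsto (fun y : ℝ => log (1 + y)) l (nhds 0) := by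
      have hb : Filter.Tendsto (fun y : ℝ => 1 + y) l (nhds 1) := by
        have := (tendsto_const_nhds (x := (1:ℝ))).add tendsto_zero_within; simpa using this
      have := (Real.continuousAt_log (by norm_num : (1:ℝ) ≠ 0)).tendsto.comp hb
      simpa [Function.comp_def] using this
    have hlog1m : Filter.Tendsto (fun y : ℝ => log (1 - y)) l (nhds 0) := by
      have := (Real.continuousAt_log (by norm_num : (1:ℝ) ≠ 0)).tendsto.comp ht_1s
      simpa [Function.comp_def] using this
    have lA : Filter.Tendsto (fun y : ℝ => 4 * Li 3 y) l (nhds 0) := by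
      have := (tendsto_Li (by norm_num : 2 ≤ 3) tendsto_zero_within hb_id).const_mul (4:ℝ)
      simpa [Li_zero] using this
    have lB : Filter.Tendsto (fun y : ℝ => Li 3 (y ^ 2)) l (nhds 0) := by
      have := tendsto_Li (by norm_num : 2 ≤ 3) ht_sq hb_sq
      simpa [Li_zero] using this
    have lC : Filter.Tendsto (fun y : ℝ => 4 * Li 3 (1 - y)) l (nhds (4 * Z)) := by
      have := (tendsto_Li (by norm_num : 2 ≤ 3) ht_1s hb_1s).const_mul (4:ℝ)
      rwa [hLi31] at this
    have lD : Filter.Tendsto (fun y : ℝ => 4 * Li 3 (y / (1 + y))) l (nhds 0) := by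
      have := (tendsto_Li (by norm_num : 2 ≤ 3) ht_w hb_w).const_mul (4:ℝ)
      simpa [Li_zero] using this
    have lE : Filter.Tendsto (fun y : ℝ => (log (1 + y) - log (1 - y)) * Li 2 (y ^ 2)) l (nhds 0) := by
      have hLi2 : Filter.Tendsto (fun y : ℝ => Li 2 (y ^ 2)) l (nhds 0) := by
        have := tendsto_Li (le_refl 2) ht_sq hb_sq
        simpa [Li_zero] using this
      have := (hlog1p.sub hlog1m).mul hLi2
      simpa using this
    have lF : Filter.Tendsto (fun y : ℝ => π ^ 2 / 2 * log (1 + y)) l (nhds 0) := by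
      have := hlog1p.const_mul (π ^ 2 / 2); simpa using this
    have lG : Filter.Tendsto (fun y : ℝ => π ^ 2 / 6 * log (1 - y)) l (nhds 0) := by
      have := hlog1m.const_mul (π ^ 2 / 6); simpa using this
    have lH : Filter.Tendsto (fun y : ℝ => 2 / 3 * (log (1 + y)) ^ 3) l (nhds 0) := by
      have := (hlog1p.pow 3).const_mul ((2:ℝ) / 3); simpa using this
    have lI : Filter.Tendsto (fun y : ℝ => 2 * log y * (log (1 - y)) ^ 2) l (nhds 0) := by
      have := (tendsto_log_mul_log_pow 1).const_mul (2:ℝ)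
      simp only [mul_zero] at this
      refine this.congr fun y => ?_
      ring
    have lJ : Filter.Tendsto (fun y : ℝ => 8 * F21 y) l (nhds 0) := by
      have := tendsto_F21.const_mul (8:ℝ); simpa using this
    have tot := (((((((((lA.sub lB).sub lC).sub lD).add_const (4 * Z)).add lE).add lF).add
      lG).add lH).sub lI).sub lJ
    have e : (0:ℝ) - 0 - 4 * Z - 0 + 4 * Z + 0 + 0 + 0 + 0 - 0 - 0 = 0 := by ring
    rw [e] at tot
    exact tot
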